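/- For the subhedge L^I, with 0 < K₂ < b̲ < S_0 < b̄ < K₁, the solution of the defining linear system is α₀ = (S_0(K₁+K₂−b̄−b̲) + b̄b̲ − K₁K₂)/((b̄−K₂)(K₁−b̲)), α₁ = (K₁+K₂−b̄−b̲)/((b̄−K₂)(K₁−b̲)), α₂ = 1/(b̄−K₂), α₃ = (b̄−K₂+K₁−b̲)/((b̄−K₂)(K₁−b̲)), K₃ = (b̄K₁−b̲K₂)/(b̄−K₂−b̲+K₁), γ₁ = (b̄−b̲)/(b̄−K₂), γ₂ = (b̄−b̲)/(K₁−b̲); and moreover the quantities α₂, α₃, γ₁, γ₂, α₃−α₂, α₂−α₁ and α₃−α₂+α₁ are all strictly positive. -/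
import Mathlib


/-- Solution of the linear system defining the subhedge L^I, together with
the positivity of the relevant coefficients. -/
theorem stmt6 (S₀ lb ub K₁ K₂ K₃ α₀ α₁ α₂ α₃ γ₁ γ₂ : ℝ)
    (h0 : 0 < K₂) (h1 : K₂ < lb) (h2 : lb < S₀) (h3 : S₀ < ub) (h4 : ub < K₁)
    (e1 : 0 = α₀ + α₁ * (lb - S₀) - α₂ * (lb - K₂))
    (e2 : 0 = α₀ + α₁ * (ub - S₀) - α₂ * (ub - K₂) + α₃ * (K₃ - lb) - γ₁ + γ₂)
    (e3 : 1 = α₀ + α₁ * (K₂ - S₀) + (α₂ - α₁) * (K₂ - lb) - α₂ * (K₂ - ub))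
    (e4 : 1 = α₀ + α₁ * (K₂ - S₀) - (α₃ - α₂ + α₁) * (K₂ - ub) + (α₃ - α₂) * (K₂ - lb))
    (e5 : γ₁ = (K₃ - lb) * α₃)
    (e6 : γ₂ = (ub - K₃) * α₃)
    (e7 : (K₃ - lb) / (K₁ - lb) = (ub - K₃) / (ub - K₂)) :
    α₀ = (S₀ * (K₁ + K₂ - ub - lb) + ub * lb - K₁ * K₂) / ((ub - K₂) * (K₁ - lb)) ∧
    α₁ = (K₁ + K₂ - ub - lb) / ((ub - K₂) * (K₁ - lb)) ∧
    α₂ = 1 / (ub - K₂) ∧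
    α₃ = (ub - K₂ + K₁ - lb) / ((ub - K₂) * (K₁ - lb)) ∧
    K₃ = (ub * K₁ - lb * K₂) / (ub - K₂ - lb + K₁) ∧
    γ₁ = (ub - lb) / (ub - K₂) ∧
    γ₂ = (ub - lb) / (K₁ - lb) ∧
    0 < α₂ ∧ 0 < α₃ ∧ 0 < γ₁ ∧ 0 < γ₂ ∧
    0 < α₃ - α₂ ∧ 0 < α₂ - α₁ ∧ 0 < α₃ - α₂ + α₁ := by
  have hub : (0:ℝ) < ub - K₂ := by linarith
  have hK1 : (0:ℝ) < K₁ - lb := by linarith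
  have hul : (0:ℝ) < ub - lb := by linarith
  have hD : (0:ℝ) < ub - K₂ - lb + K₁ := by linarith
  have hE : (0:ℝ) < (ub - K₂) * (K₁ - lb) := mul_pos hub hK1
  have hub' := hub.ne'
  have hK1' := hK1.ne'
  have hD' := hD.ne'
  have hE' := hE.ne'
  -- cleared equations
  have hA2c : α₂ * (ub - K₂) = 1 := by linear_combination e1 - e3
  have hB : α₃ + α₁ = 2 * α₂ := by
    have h : (α₃ + α₁ - 2 * α₂) * (ub - lb) = 0 := by linear_combination e3 - e4
    rcases mul_eq_zero.mp h with h' | h' <;> linarith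
  have hK7 : (K₃ - lb) * (ub - K₂) = (ub - K₃) * (K₁ - lb) := by
    rw [div_eq_div_iff hK1' hub'] at e7
    linear_combination e7
  have hK3c : K₃ * (ub - K₂ - lb + K₁) = ub * K₁ - lb * K₂ := by
    linear_combination hK7
  have hC : (α₃ - α₂) * (ub - lb) = (ub - K₃) * α₃ := by
    linear_combination e2 - e1 - e5 + e6 + (ub - lb) * hB
  have hA3z : (α₃ * ((ub - K₂) * (K₁ - lb)) - (ub - K₂ - lb + K₁)) * (ub - lb) = 0 := by
    linear_combination (ub - K₂) * (ub - K₂ - lb + K₁) * hC - (ub - K₂) * α₃ * hK3c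
      + (ub - K₂ - lb + K₁) * (ub - lb) * hA2c
  have hA3c : α₃ * ((ub - K₂) * (K₁ - lb)) = ub - K₂ - lb + K₁ := by
    rcases mul_eq_zero.mp hA3z with h' | h'
    · linarith
    · linarith
  have hA1c : α₁ * ((ub - K₂) * (K₁ - lb)) = K₁ + K₂ - ub - lb := by
    linear_combination (ub - K₂) * (K₁ - lb) * hB - hA3c + 2 * (K₁ - lb) * hA2c
  have hA0c : α₀ * ((ub - K₂) * (K₁ - lb)) = S₀ * (K₁ + K₂ - ub - lb) + ub * lb - K₁ * K₂ := by
    linear_combination (-((ub - K₂) * (K₁ - lb))) * e1 - (lb - S₀) * hA1c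
      + (lb - K₂) * (K₁ - lb) * hA2c
  -- div forms
  have hA2 : α₂ = 1 / (ub - K₂) := eq_div_of_mul_eq hub' hA2c
  have hA3 : α₃ = (ub - K₂ + K₁ - lb) / ((ub - K₂) * (K₁ - lb)) := by
    rw [eq_div_iff hE']; linear_combination hA3c
  have hA1 : α₁ = (K₁ + K₂ - ub - lb) / ((ub - K₂) * (K₁ - lb)) :=
    eq_div_of_mul_eq hE' hA1c
  have hA0 : α₀ = (S₀ * (K₁ + K₂ - ub - lb) + ub * lb - K₁ * K₂) / ((ub - K₂) * (K₁ - lb)) :=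
    eq_div_of_mul_eq hE' hA0c
  have hK3 : K₃ = (ub * K₁ - lb * K₂) / (ub - K₂ - lb + K₁) := eq_div_of_mul_eq hD' hK3c
  have hub3 : ub - K₃ = (ub - lb) * (ub - K₂) / (ub - K₂ - lb + K₁) := by
    rw [eq_div_iff hD']; linear_combination -hK3c
  have hK3l : K₃ - lb = (ub - lb) * (K₁ - lb) / (ub - K₂ - lb + K₁) := by
    rw [eq_div_iff hD']; linear_combination hK3c
  have hG1 : γ₁ = (ub - lb) / (ub - K₂) := by
    rw [e5, hK3l, hA3, eq_div_iff hub']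
    field_simp
    ring
  have hG2 : γ₂ = (ub - lb) / (K₁ - lb) := by
    rw [e6, hub3, hA3, eq_div_iff hK1']
    field_simp
    ring
  refine ⟨hA0, hA1, hA2, hA3, hK3, hG1, hG2, ?_, ?_, ?_, ?_, ?_, ?_, ?_⟩
  · rw [hA2]; positivity
  · rw [hA3]; exact div_pos (by linarith) hE
  · rw [hG1]; exact div_pos hul hub
  · rw [hG2]; exact div_pos hul hK1
  · have h32 : (α₃ - α₂) * (K₁ - lb) = 1 := by
      have h : ((α₃ - α₂) * (K₁ - lb)) * (ub - K₂) = 1 * (ub - K₂) := by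
        linear_combination hA3c - (K₁ - lb) * hA2c
      exact mul_right_cancel₀ hub' h
    rw [eq_div_of_mul_eq hK1' h32]; positivity
  · have h21 : (α₂ - α₁) * (K₁ - lb) = 1 := by
      have h : ((α₂ - α₁) * (K₁ - lb)) * (ub - K₂) = 1 * (ub - K₂) := by
        linear_combination (K₁ - lb) * hA2c - hA1c
      exact mul_right_cancel₀ hub' h
    rw [eq_div_of_mul_eq hK1' h21]; positivity
  · have h : α₃ - α₂ + α₁ = α₂ := by linear_combination hB
    rw [h, hA2]; positivity
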